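/- If S generates S(Ω) for an infinite set Ω, and A = {a₁, a₂, ...} is a countable subset of S, then setting S₀ = S \ A and Sₙ = Sₙ₋₁ ∪ {aₙ}, there exists some n such that Sₙ generates S(Ω). -/

import Mathlib

open Equiv Set Cardinal

noncomputable section MNTools
set_option linter.unusedSectionVars false

universe u
variable {β : Type u}

theorem Equiv.Perm.inv_apply_self (f : Perm β) (x : β) : f⁻¹ (f x) = x := f.symm_apply_apply x

theorem Equiv.Perm.apply_inv_self (f : Perm β) (x : β) : f (f⁻¹ x) = x := f.apply_symm_apply x

/-- `g` moves only points of `s`. -/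
def FixesOff (s : Set β) (g : Equiv.Perm β) : Prop := ∀ x ∉ s, g x = x

theorem FixesOff.mono {s t : Set β} {g : Perm β} (h : FixesOff s g) (hst : s ⊆ t) :
    FixesOff t g := fun x hx => h x fun hxs => hx (hst hxs)

theorem FixesOff.apply_mem {s : Set β} {g : Perm β} (h : FixesOff s g) {x : β} (hx : x ∈ s) :
    g x ∈ s := by
  by_contra hgx
  have h2 : g (g x) = g x := h _ hgx
  have h3 := g.injective h2
  rw [h3] at hgx
  exact hgx hx

theorem FixesOff.mul {s : Set β} {f g : Perm β} (hf : FixesOff s f) (hg : FixesOff s g) :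
    FixesOff s (f * g) := by
  intro x hx
  simp [Perm.mul_apply, hg x hx, hf x hx]

theorem FixesOff.inv {s : Set β} {g : Perm β} (h : FixesOff s g) : FixesOff s g⁻¹ := by
  intro x hx
  have : g x = x := h x hx
  conv_lhs => rw [← this]
  simp

theorem FixesOff.conj {s : Set β} {g : Perm β} (h : FixesOff s g) (k : Perm β) :
    FixesOff (k '' s) (k * g * k⁻¹) := by
  intro x hx
  have hks : k⁻¹ x ∉ s := fun hm => hx ⟨k⁻¹ x, hm, by simp⟩
  simp [Perm.mul_apply, show g (k.symm x) = k.symm x from h _ hks]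

theorem FixesOff.commute {s t : Set β} {f g : Perm β} (hf : FixesOff s f) (hg : FixesOff t g)
    (hd : Disjoint s t) : Commute f g := by
  have key : ∀ x, f (g x) = g (f x) := by
    intro x
    by_cases hxs : x ∈ s
    · have hxt : x ∉ t := fun h => (Set.disjoint_left.mp hd hxs) h
      have hfx : f x ∈ s := hf.apply_mem hxs
      have hfxt : f x ∉ t := fun h => (Set.disjoint_left.mp hd hfx) h
      rw [hg x hxt, hg _ hfxt]
    · by_cases hxt : x ∈ t
      · have hgx : g x ∈ t := hg.apply_mem hxt
        have hgxs : g x ∉ s := fun h => (Set.disjoint_left.mp hd h) hgx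
        rw [hf x hxs, hf _ hgxs]
      · rw [hf x hxs, hg x hxt, hf x hxs]
  ext x
  simp [Perm.mul_apply, key x]

/-- Extend a bijection between subsets (with equinumerous complements) to a permutation. -/
theorem exists_perm_extend {s t : Set β} (e : ↥s ≃ ↥t) (hc : #↥(sᶜ) = #↥(tᶜ)) :
    ∃ g : Perm β, ∀ x (h : x ∈ s), g x = ↑(e ⟨x, h⟩) := by
  classical
  obtain ⟨f⟩ := Cardinal.eq.1 hc
  refine ⟨(Equiv.Set.sumCompl s).symm.trans ((e.sumCongr f).trans (Equiv.Set.sumCompl t)), ?_⟩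
  intro x h
  simp [Equiv.Set.sumCompl_symm_apply_of_mem h]

theorem exists_perm_image {s t : Set β} (hst : #↥s = #↥t) (hc : #↥(sᶜ) = #↥(tᶜ)) :
    ∃ g : Perm β, g '' s = t := by
  obtain ⟨e⟩ := Cardinal.eq.1 hst
  obtain ⟨g, hg⟩ := exists_perm_extend e hc
  refine ⟨g, ?_⟩
  apply Set.eq_of_subset_of_subset
  · rintro y ⟨x, hx, rfl⟩
    rw [hg x hx]; exact (e ⟨x, hx⟩).2
  · intro y hy
    refine ⟨↑(e.symm ⟨y, hy⟩), (e.symm ⟨y, hy⟩).2, ?_⟩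
    rw [hg _ (e.symm ⟨y, hy⟩).2]
    simp

/-- A permutation of a sum type fixing the right part pointwise is `sumCongr σ 1`. -/
theorem perm_sum_decomp {γ : Type*} {δ : Type*} (g : Perm (γ ⊕ δ))
    (h : ∀ d, g (Sum.inr d) = Sum.inr d) :
    ∃ σ : Perm γ, g = Equiv.sumCongr σ (Equiv.refl δ) := by
  have key : ∀ b : γ, ∃ b', g (Sum.inl b) = Sum.inl b' := by
    intro b
    rcases hc : g (Sum.inl b) with b' | d
    · exact ⟨b', rfl⟩
    · exfalso
      have := g.injective (hc.trans (h d).symm)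
      simp at this
  have key' : ∀ b : γ, ∃ b', g.symm (Sum.inl b) = Sum.inl b' := by
    intro b
    rcases hc : g.symm (Sum.inl b) with b' | d
    · exact ⟨b', rfl⟩
    · exfalso
      have h2 : g (Sum.inr d) = Sum.inl b := by
        rw [← hc]; simp
      rw [h d] at h2
      simp at h2
  choose f hf using key
  choose f' hf' using key'
  have hlr : Function.LeftInverse f' f := by
    intro b
    have : g.symm (g (Sum.inl b)) = Sum.inl b := by simp
    rw [hf b, hf' (f b)] at this
    exact Sum.inl.inj this
  have hrl : Function.RightInverse f' f := by
    intro b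
    have : g (g.symm (Sum.inl b)) = Sum.inl b := by simp
    rw [hf' b, hf (f' b)] at this
    exact Sum.inl.inj this
  refine ⟨⟨f, f', hlr, hrl⟩, ?_⟩
  ext x
  rcases x with b | d
  · simp [hf b]
  · simp [h d]

/-- Any full-size subset of an infinite type contains two disjoint full-size subsets. -/
theorem exists_two_disjoint_large [Infinite β] {s : Set β} (h : #↥s = #β) :
    ∃ s₁ s₂ : Set β, s₁ ⊆ s ∧ s₂ ⊆ s ∧ Disjoint s₁ s₂ ∧ #↥s₁ = #β ∧ #↥s₂ = #β := by
  have hsum : (#β : Cardinal) = #(β ⊕ β) := by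
    simp [Cardinal.mk_sum, Cardinal.add_eq_self (Cardinal.aleph0_le_mk β)]
  obtain ⟨ψ⟩ := Cardinal.eq.1 (h.trans hsum)
  refine ⟨Subtype.val '' (ψ ⁻¹' (Set.range Sum.inl)), Subtype.val '' (ψ ⁻¹' (Set.range Sum.inr)),
    ?_, ?_, ?_, ?_, ?_⟩
  · exact (Subtype.coe_image_subset _ _)
  · exact (Subtype.coe_image_subset _ _)
  · rw [Set.disjoint_left]
    rintro x ⟨y₁, hy₁, rfl⟩ ⟨y₂, hy₂, hval⟩
    have : y₂ = y₁ := Subtype.val_injective hval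
    rw [this] at hy₂
    obtain ⟨a, ha⟩ := hy₁
    obtain ⟨b, hb⟩ := hy₂
    rw [← ha] at hb
    simp at hb
  · rw [Cardinal.mk_image_eq Subtype.val_injective,
      Cardinal.mk_preimage_of_injective_of_subset_range _ _ ψ.injective (by simp [Equiv.range_eq_univ]),
      Cardinal.mk_range_eq _ Sum.inl_injective]
  · rw [Cardinal.mk_image_eq Subtype.val_injective,
      Cardinal.mk_preimage_of_injective_of_subset_range _ _ ψ.injective (by simp [Equiv.range_eq_univ]),
      Cardinal.mk_range_eq _ Sum.inr_injective]

/-- Finite pigeonhole for cardinalities. -/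
theorem exists_large_of_biUnion [Infinite β] {ι : Type*} [DecidableEq ι] (A : Finset ι) (s : ι → Set β)
    (hcov : (⋃ i ∈ A, s i) = Set.univ) : ∃ i ∈ A, #↥(s i) = #β := by
  by_contra hno
  push_neg at hno
  have hlt : ∀ i ∈ A, #↥(s i) < #β := by
    intro i hi
    exact lt_of_le_of_ne (Cardinal.mk_set_le _) (hno i hi)
  have key : ∀ (B : Finset ι), (∀ i ∈ B, #↥(s i) < #β) → #↥(⋃ i ∈ B, s i) < #β := by
    intro B
    induction B using Finset.induction_on with
    | empty => intro _; simp; exact Cardinal.aleph0_pos.trans_le (Cardinal.aleph0_le_mk β)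
    | insert _ _ hnotmem ih =>
      intro hB
      rw [Finset.set_biUnion_insert]
      calc #↥(s _ ∪ _) ≤ #↥(s _) + #↥(⋃ i ∈ _, s i) := Cardinal.mk_union_le _ _
        _ < #β := Cardinal.add_lt_of_lt (Cardinal.aleph0_le_mk β)
            (hB _ (Finset.mem_insert_self _ _))
            (ih fun i hi => hB i (Finset.mem_insert_of_mem hi))
  have := key A hlt
  rw [hcov] at this
  simp at this

section StepB
variable {α : Type u} [Infinite α]

theorem mkSum : #(α ⊕ α) = #α := by
  simp [Cardinal.mk_sum, Cardinal.add_eq_self (Cardinal.aleph0_le_mk α)]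

/-- membership of sumCongr pairs -/
theorem sumCongr_mem (K : Subgroup (Perm (α ⊕ α)))
    (h1 : ∀ σ : Perm α, (Equiv.sumCongr σ (Equiv.refl α) : Perm (α ⊕ α)) ∈ K)
    (hsw : (Equiv.sumComm α α : Perm (α ⊕ α)) ∈ K)
    (σ τ : Perm α) : (Equiv.sumCongr σ τ : Perm (α ⊕ α)) ∈ K := by
  have hright : (Equiv.sumCongr (Equiv.refl α) τ : Perm (α ⊕ α))
      = (Equiv.sumComm α α : Perm (α ⊕ α)) * (Equiv.sumCongr τ (Equiv.refl α)) *
        (Equiv.sumComm α α : Perm (α ⊕ α)) := by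
    ext x
    rcases x with a | b <;> simp [Perm.mul_apply]
  have hmul : (Equiv.sumCongr σ τ : Perm (α ⊕ α))
      = (Equiv.sumCongr σ (Equiv.refl α) : Perm (α ⊕ α)) * (Equiv.sumCongr (Equiv.refl α) τ) := by
    ext x
    rcases x with a | b <;> simp [Perm.mul_apply]
  rw [hmul, hright]
  exact mul_mem (h1 σ) (mul_mem (mul_mem hsw (h1 τ)) hsw)

theorem stepB (K : Subgroup (Perm (α ⊕ α)))
    (h1 : ∀ σ : Perm α, (Equiv.sumCongr σ (Equiv.refl α) : Perm (α ⊕ α)) ∈ K)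
    (hsw : (Equiv.sumComm α α : Perm (α ⊕ α)) ∈ K)
    (A : Set α) (hA : #↥A = #α) (hAc : #↥(Aᶜ) = #α)
    (u : Perm (α ⊕ α)) (hu : u ∈ K)
    (huim : u '' (Set.range Sum.inl) = (Sum.inl '' A ∪ Sum.inr '' A)) :
    K = ⊤ := by
  classical
  set L : Set (α ⊕ α) := Set.range Sum.inl with hLdef
  have hSymL : ∀ g : Perm (α ⊕ α), FixesOff L g → g ∈ K := by
    intro g hg
    have hr : ∀ d : α, g (Sum.inr d) = Sum.inr d := by
      intro d
      apply hg
      simp [hLdef]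
    obtain ⟨σ, rfl⟩ := perm_sum_decomp g hr
    exact h1 σ
  have hSymIm : ∀ k : Perm (α ⊕ α), k ∈ K →
      ∀ g : Perm (α ⊕ α), FixesOff (k '' L) g → g ∈ K := by
    intro k hk g hg
    have h2 : FixesOff ((k⁻¹ : Perm (α ⊕ α)) '' (k '' L))
        ((k⁻¹ : Perm (α ⊕ α)) * g * (k⁻¹ : Perm (α ⊕ α))⁻¹) := hg.conj _
    have him : (k⁻¹ : Perm (α ⊕ α)) '' (k '' L) = L := by
      rw [← Set.image_comp]
      have : (⇑(k⁻¹ : Perm (α ⊕ α)) ∘ ⇑k) = id := by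
        funext x; simp
      rw [this, Set.image_id]
    rw [him] at h2
    have hgK : (k⁻¹ : Perm (α ⊕ α)) * g * (k⁻¹ : Perm (α ⊕ α))⁻¹ ∈ K := hSymL _ h2
    have : g = k * ((k⁻¹ : Perm (α ⊕ α)) * g * (k⁻¹ : Perm (α ⊕ α))⁻¹) * k⁻¹ := by group
    rw [this]
    exact mul_mem (mul_mem hk hgK) (inv_mem hk)
  -- reaching generic sets
  have hReach : ∀ E : Set (α ⊕ α),
      #↥(Sum.inl ⁻¹' E) = #α → #↥(Sum.inr ⁻¹' E) = #α →
      #↥(Sum.inl ⁻¹' Eᶜ) = #α → #↥(Sum.inr ⁻¹' Eᶜ) = #α →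
      ∀ g : Perm (α ⊕ α), FixesOff E g → g ∈ K := by
    intro E hE1 hE2 hE3 hE4 g hg
    obtain ⟨s₁, hs₁⟩ := exists_perm_image (β := α) (hA.trans hE1.symm)
      (hAc.trans (by rw [Set.preimage_compl] at hE3; exact hE3.symm))
    obtain ⟨s₂, hs₂⟩ := exists_perm_image (β := α) (hA.trans hE2.symm)
      (hAc.trans (by rw [Set.preimage_compl] at hE4; exact hE4.symm))
    set k : Perm (α ⊕ α) := (Equiv.sumCongr s₁ s₂ : Perm (α ⊕ α)) * u with hkdef
    have hkK : k ∈ K := mul_mem (sumCongr_mem K h1 hsw s₁ s₂) hu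
    have hkim : k '' L = E := by
      have h0 : k '' L = (Equiv.sumCongr s₁ s₂ : Perm (α ⊕ α)) '' (u '' L) := by
        rw [← Set.image_comp]; rfl
      rw [h0, huim, Set.image_union, ← Set.image_comp, ← Set.image_comp]
      have hil : (⇑(Equiv.sumCongr s₁ s₂ : Perm (α ⊕ α)) ∘ Sum.inl) = Sum.inl ∘ ⇑s₁ := by
        funext a; rfl
      have hir : (⇑(Equiv.sumCongr s₁ s₂ : Perm (α ⊕ α)) ∘ Sum.inr) = Sum.inr ∘ ⇑s₂ := by
        funext a; rfl
      rw [hil, hir, Set.image_comp, Set.image_comp, hs₁, hs₂,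
        Set.image_preimage_eq_inter_range, Set.image_preimage_eq_inter_range]
      rw [← Set.inter_union_distrib_left, Set.range_inl_union_range_inr, Set.inter_univ]
    exact hSymIm k hkK g (hkim ▸ hg)
  -- partition into six pieces
  obtain ⟨e6⟩ : Nonempty (α ≃ Fin 6 × α) := by
    rw [← Cardinal.eq]
    have h6 : #(Fin 6 × α) = #α := by
      rw [Cardinal.mk_prod]
      simp only [Cardinal.mk_fintype, Fintype.card_fin, Cardinal.lift_natCast, Cardinal.lift_id, Cardinal.lift_uzero]
      exact Cardinal.mul_eq_right (Cardinal.aleph0_le_mk α)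
        (le_trans (le_of_lt (Cardinal.nat_lt_aleph0 6)) (Cardinal.aleph0_le_mk α)) (by simp)
    exact h6.symm
  set As : Fin 6 → Set α := fun i => e6 ⁻¹' {p | p.1 = i} with hAsdef
  have hAs_mem : ∀ a : α, a ∈ As (e6 a).1 := fun a => rfl
  have hAs_disj : ∀ {i j : Fin 6} {a : α}, a ∈ As i → a ∈ As j → i = j := by
    intro i j a hi hj
    have h1 : (e6 a).1 = i := hi
    have h2 : (e6 a).1 = j := hj
    rw [← h1, ← h2]
  have hAs_card : ∀ i, #↥(As i) = #α := by
    intro i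
    have e1 : ↥(As i) ≃ {p : Fin 6 × α // p.1 = i} := e6.subtypeEquiv (fun a => Iff.rfl)
    have e2 : {p : Fin 6 × α // p.1 = i} ≃ α :=
      { toFun := fun p => p.1.2
        invFun := fun a => ⟨(i, a), rfl⟩
        left_inv := by rintro ⟨⟨j, a⟩, h⟩; subst h; rfl
        right_inv := fun a => rfl }
    rw [Cardinal.mk_congr (e1.trans e2)]
  set Q : Fin 6 → Set (α ⊕ α) := fun i => Sum.inl '' As i ∪ Sum.inr '' As i with hQdef
  have hQinl : ∀ {i : Fin 6} {a : α}, Sum.inl a ∈ Q i ↔ a ∈ As i := by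
    intro i a; simp [hQdef]
  have hQinr : ∀ {i : Fin 6} {a : α}, Sum.inr a ∈ Q i ↔ a ∈ As i := by
    intro i a; simp [hQdef]
  have hQcover : ∀ x : α ⊕ α, ∃ i, x ∈ Q i := by
    intro x; rcases x with a | a
    · exact ⟨_, hQinl.2 (hAs_mem a)⟩
    · exact ⟨_, hQinr.2 (hAs_mem a)⟩
  have hQdisj : ∀ {i j : Fin 6} {x : α ⊕ α}, x ∈ Q i → x ∈ Q j → i = j := by
    intro i j x hi hj; rcases x with a | a
    · exact hAs_disj (hQinl.1 hi) (hQinl.1 hj)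
    · exact hAs_disj (hQinr.1 hi) (hQinr.1 hj)
  rw [Subgroup.eq_top_iff']
  intro g
  -- large cells
  set CL : Fin 6 × Fin 6 → Set α := fun p => {a | a ∈ As p.2 ∧ g (Sum.inl a) ∈ Q p.1} with hCLdef
  set CR : Fin 6 × Fin 6 → Set α := fun p => {a | a ∈ As p.2 ∧ g (Sum.inr a) ∈ Q p.1} with hCRdef
  obtain ⟨pL, -, hpL⟩ := exists_large_of_biUnion (Finset.univ : Finset (Fin 6 × Fin 6)) CL (by
    ext a
    simp only [Set.mem_iUnion, Set.mem_univ, iff_true, Finset.mem_univ, exists_true_left]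
    obtain ⟨i, hi⟩ := hQcover (g (Sum.inl a))
    exact ⟨(i, (e6 a).1), hAs_mem a, hi⟩)
  obtain ⟨pR, -, hpR⟩ := exists_large_of_biUnion (Finset.univ : Finset (Fin 6 × Fin 6)) CR (by
    ext a
    simp only [Set.mem_iUnion, Set.mem_univ, iff_true, Finset.mem_univ, exists_true_left]
    obtain ⟨i, hi⟩ := hQcover (g (Sum.inr a))
    exact ⟨(i, (e6 a).1), hAs_mem a, hi⟩)
  have hi'ex : ∃ i' : Fin 6, i' ≠ pL.1 ∧ i' ≠ pL.2 ∧ i' ≠ pR.1 ∧ i' ≠ pR.2 := by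
    by_contra hno
    push_neg at hno
    have hsub : (Finset.univ : Finset (Fin 6)) ⊆ {pL.1, pL.2, pR.1, pR.2} := by
      intro x _
      simp only [Finset.mem_insert, Finset.mem_singleton]
      by_cases h1 : x = pL.1
      · exact Or.inl h1
      by_cases h2 : x = pL.2
      · exact Or.inr (Or.inl h2)
      by_cases h3 : x = pR.1
      · exact Or.inr (Or.inr (Or.inl h3))
      exact Or.inr (Or.inr (Or.inr (hno x h1 h2 h3)))
    have h64 : (Finset.univ : Finset (Fin 6)).card ≤ ({pL.1, pL.2, pR.1, pR.2} : Finset (Fin 6)).card :=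
      Finset.card_le_card hsub
    have hc4 : ({pL.1, pL.2, pR.1, pR.2} : Finset (Fin 6)).card ≤ 4 := by
      refine le_trans (Finset.card_insert_le _ _) ?_
      have t2 : ({pL.2, pR.1, pR.2} : Finset (Fin 6)).card ≤ 3 := by
        refine le_trans (Finset.card_insert_le _ _) ?_
        have t3 : ({pR.1, pR.2} : Finset (Fin 6)).card ≤ 2 := by
          refine le_trans (Finset.card_insert_le _ _) ?_
          simp
        omega
      omega
    rw [Finset.card_univ] at h64
    simp at h64
    omega
  obtain ⟨i', hne1, hne2, hne3, hne4⟩ := hi'ex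
  set M : Set (α ⊕ α) := ⇑g ⁻¹' Q i' with hMdef
  have hgM : ⇑g '' M = Q i' := Set.image_preimage_eq _ g.surjective
  have hSLM : ∀ a ∈ CL pL, Sum.inl a ∉ M := by
    intro a ha hm
    exact hne1 (hQdisj hm ha.2)
  have hSLQ : ∀ a ∈ CL pL, Sum.inl a ∉ Q i' := by
    intro a ha hq
    exact hne2 (hAs_disj (hQinl.1 hq) ha.1)
  have hSRM : ∀ a ∈ CR pR, Sum.inr a ∉ M := by
    intro a ha hm
    exact hne3 (hQdisj hm ha.2)
  have hSRQ : ∀ a ∈ CR pR, Sum.inr a ∉ Q i' := by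
    intro a ha hq
    exact hne4 (hAs_disj (hQinr.1 hq) ha.1)
  obtain ⟨FL, WGL, hFLs, hWGLs, hFWGL, hFLc, hWGLc⟩ := exists_two_disjoint_large hpL
  obtain ⟨FR, WGR, hFRs, hWGRs, hFWGR, hFRc, hWGRc⟩ := exists_two_disjoint_large hpR
  set F : Set (α ⊕ α) := Sum.inl '' FL ∪ Sum.inr '' FR with hFdef
  have hFM : Disjoint M F := by
    rw [Set.disjoint_right]
    rintro x (⟨a, ha, rfl⟩ | ⟨a, ha, rfl⟩)
    · exact hSLM a (hFLs ha)
    · exact hSRM a (hFRs ha)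
  have hFQ : Disjoint (Q i') F := by
    rw [Set.disjoint_right]
    rintro x (⟨a, ha, rfl⟩ | ⟨a, ha, rfl⟩)
    · exact hSLQ a (hFLs ha)
    · exact hSRQ a (hFRs ha)
  have hWGLsub1 : Sum.inl '' WGL ⊆ (M ∪ F)ᶜ := by
    rintro x ⟨a, ha, rfl⟩ hx
    rcases hx with hm | hf
    · exact hSLM a (hWGLs ha) hm
    · rcases hf with ⟨b, hb, hba⟩ | ⟨b, hb, hba⟩
      · cases hba
        exact Set.disjoint_left.mp hFWGL hb ha
      · cases hba
  have hWGLsub2 : Sum.inl '' WGL ⊆ (Q i' ∪ F)ᶜ := by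
    rintro x ⟨a, ha, rfl⟩ hx
    rcases hx with hm | hf
    · exact hSLQ a (hWGLs ha) hm
    · rcases hf with ⟨b, hb, hba⟩ | ⟨b, hb, hba⟩
      · cases hba
        exact Set.disjoint_left.mp hFWGL hb ha
      · cases hba
  have hbig : ∀ s : Set (α ⊕ α), Sum.inl '' WGL ⊆ s → #↥s = #α := by
    intro s hs
    refine le_antisymm ?_ ?_
    · rw [← mkSum (α := α)]
      exact Cardinal.mk_set_le s
    · rw [← hWGLc, ← Cardinal.mk_image_eq (f := (Sum.inl : α → α ⊕ α)) Sum.inl_injective]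
      exact Cardinal.mk_le_mk_of_subset hs
  -- build the permutation c
  set eM : ↥M ≃ ↥(Q i') := (Equiv.Set.image (⇑g) M g.injective).trans (Equiv.setCongr hgM)
    with heMdef
  have heM : ∀ x : ↥M, (↑(eM x) : α ⊕ α) = g ↑x := fun x => rfl
  set e : ↥(M ∪ F) ≃ ↥(Q i' ∪ F) :=
    (Equiv.Set.union hFM).trans ((eM.sumCongr (Equiv.refl ↥F)).trans
      (Equiv.Set.union hFQ).symm) with hedef
  obtain ⟨c, hc⟩ := exists_perm_extend e ((hbig _ hWGLsub1).trans (hbig _ hWGLsub2).symm)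
  have hcM : ∀ x ∈ M, c x = g x := by
    intro x hx
    have hxu : x ∈ M ∪ F := Set.mem_union_left _ hx
    rw [hc x hxu]
    have h1 : (Equiv.Set.union hFM) ⟨x, hxu⟩ = Sum.inl ⟨x, hx⟩ :=
      Equiv.Set.union_apply_left _ hx
    simp only [hedef, Equiv.trans_apply, h1, Equiv.sumCongr_apply, Sum.map_inl,
      Equiv.Set.union_symm_apply_left]
    exact heM ⟨x, hx⟩
  have hcF : ∀ x ∈ F, c x = x := by
    intro x hx
    have hxu : x ∈ M ∪ F := Set.mem_union_right _ hx
    rw [hc x hxu]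
    have hxm : x ∉ M := Set.disjoint_right.mp hFM hx
    have h1 : (Equiv.Set.union hFM) ⟨x, hxu⟩ = Sum.inr ⟨x, hx⟩ :=
      Equiv.Set.union_apply_right _ hx
    simp only [hedef, Equiv.trans_apply, h1, Equiv.sumCongr_apply, Sum.map_inr,
      Equiv.refl_apply, Equiv.Set.union_symm_apply_right]
  -- c is supported off F
  have hcFix : FixesOff (Fᶜ) c := by
    intro x hx
    rw [Set.notMem_compl_iff] at hx
    exact hcF x hx
  -- a := g * c⁻¹ is supported off Q i'
  have haFix : FixesOff ((Q i')ᶜ) (g * c⁻¹) := by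
    intro x hx
    rw [Set.notMem_compl_iff] at hx
    have hgx : (g⁻¹ : Perm (α ⊕ α)) x ∈ M := by
      rw [hMdef]
      simp only [Set.mem_preimage]
      rw [Perm.apply_inv_self]
      exact hx
    have h2 : c ((g⁻¹ : Perm (α ⊕ α)) x) = x := by
      rw [hcM _ hgx, Perm.apply_inv_self]
    have h3 : (c⁻¹ : Perm (α ⊕ α)) x = (g⁻¹ : Perm (α ⊕ α)) x := by
      have h4 := congrArg (⇑(c⁻¹ : Perm (α ⊕ α))) h2
      simp only [Perm.inv_apply_self] at h4
      exact h4.symm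
    simp only [Perm.mul_apply, h3, Perm.apply_inv_self]
  -- cardinal facts for the two generic sets
  have hQpre_inl : Sum.inl ⁻¹' Q i' = As i' := by
    ext a; exact hQinl
  have hQpre_inr : Sum.inr ⁻¹' Q i' = As i' := by
    ext a; exact hQinr
  have hFpre_inl : Sum.inl ⁻¹' F = FL := by
    ext a
    simp only [hFdef, Set.mem_preimage, Set.mem_union, Set.mem_image]
    constructor
    · rintro (⟨b, hb, hba⟩ | ⟨b, hb, hba⟩)
      · cases hba; exact hb
      · cases hba
    · intro h; exact Or.inl ⟨a, h, rfl⟩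
  have hFpre_inr : Sum.inr ⁻¹' F = FR := by
    ext a
    simp only [hFdef, Set.mem_preimage, Set.mem_union, Set.mem_image]
    constructor
    · rintro (⟨b, hb, hba⟩ | ⟨b, hb, hba⟩)
      · cases hba
      · cases hba; exact hb
    · intro h; exact Or.inr ⟨a, h, rfl⟩
  have hsand : ∀ {s t : Set α}, s ⊆ t → #↥s = #α → #↥t = #α := by
    intro s t hst hs
    exact le_antisymm (Cardinal.mk_set_le t) (by rw [← hs]; exact Cardinal.mk_le_mk_of_subset hst)
  -- membership of c
  have hcK : c ∈ K := by
    refine hReach (Fᶜ) ?_ ?_ ?_ ?_ c hcFix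
    · refine hsand (t := Sum.inl ⁻¹' Fᶜ) ?_ (hAs_card i')
      intro a ha
      simp only [Set.mem_preimage, Set.mem_compl_iff]
      intro hf
      exact Set.disjoint_left.mp hFQ (hQinl.2 ha) hf
    · refine hsand (t := Sum.inr ⁻¹' Fᶜ) ?_ (hAs_card i')
      intro a ha
      simp only [Set.mem_preimage, Set.mem_compl_iff]
      intro hf
      exact Set.disjoint_left.mp hFQ (hQinr.2 ha) hf
    · rw [compl_compl, hFpre_inl]; exact hFLc
    · rw [compl_compl, hFpre_inr]; exact hFRc
  -- membership of a
  have haK : g * c⁻¹ ∈ K := by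
    refine hReach ((Q i')ᶜ) ?_ ?_ ?_ ?_ _ haFix
    · refine hsand (s := As pL.1) (t := Sum.inl ⁻¹' (Q i')ᶜ) ?_ (hAs_card pL.1)
      intro a ha
      simp only [Set.mem_preimage, Set.mem_compl_iff]
      intro hq
      exact hne1 (hAs_disj (hQinl.1 hq) ha)
    · refine hsand (s := As pL.1) (t := Sum.inr ⁻¹' (Q i')ᶜ) ?_ (hAs_card pL.1)
      intro a ha
      simp only [Set.mem_preimage, Set.mem_compl_iff]
      intro hq
      exact hne1 (hAs_disj (hQinr.1 hq) ha)
    · rw [compl_compl, hQpre_inl]; exact hAs_card i'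
    · rw [compl_compl, hQpre_inr]; exact hAs_card i'
  have : g = (g * c⁻¹) * c := by group
  rw [this]
  exact mul_mem haK hcK

end StepB
section Galvin
variable {α ρ : Type u}

/-- the master type for the Galvin step -/
abbrev GType (α ρ : Type u) : Type u := ((ℤ × α) ⊕ (α ⊕ α)) ⊕ ρ

def atZero (σ : Perm α) : Perm (ℤ × α) where
  toFun p := (p.1, if p.1 = 0 then σ p.2 else p.2)
  invFun p := (p.1, if p.1 = 0 then σ.symm p.2 else p.2)
  left_inv := by rintro ⟨k, a⟩; by_cases h : k = 0 <;> simp [h]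
  right_inv := by rintro ⟨k, a⟩; by_cases h : k = 0 <;> simp [h]

def ashift (σ : Perm α) : Perm (ℤ × α) where
  toFun p := (p.1, if 0 ≤ p.1 then σ p.2 else p.2)
  invFun p := (p.1, if 0 ≤ p.1 then σ.symm p.2 else p.2)
  left_inv := by rintro ⟨k, a⟩; by_cases h : 0 ≤ k <;> simp [h]
  right_inv := by rintro ⟨k, a⟩; by_cases h : 0 ≤ k <;> simp [h]

def bshift : Perm (ℤ × α) where
  toFun p := (p.1 + 1, p.2)
  invFun p := (p.1 - 1, p.2)
  left_inv := by rintro ⟨k, a⟩; simp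
  right_inv := by rintro ⟨k, a⟩; simp

def hatPerm (x : Perm (ℤ × α)) : Perm (GType α ρ) :=
  Equiv.sumCongr (Equiv.sumCongr x (Equiv.refl (α ⊕ α))) (Equiv.refl ρ)

theorem hatPerm_mul (x y : Perm (ℤ × α)) :
    (hatPerm (ρ := ρ) x) * hatPerm y = hatPerm (x * y) := by
  ext s
  rcases s with (p | v) | r <;> rfl

theorem hatPerm_one : (hatPerm (ρ := ρ) (1 : Perm (ℤ × α))) = 1 := by
  ext s
  rcases s with (p | v) | r <;> rfl

theorem hatPerm_inv (x : Perm (ℤ × α)) :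
    (hatPerm (ρ := ρ) x)⁻¹ = hatPerm x⁻¹ := by
  refine inv_eq_of_mul_eq_one_right ?_
  rw [hatPerm_mul, mul_inv_cancel, hatPerm_one]

def wfun (φ : ρ ≃ α) : GType α ρ → GType α ρ := fun s =>
  match s with
  | .inl (.inl p) => .inl (.inl p)
  | .inl (.inr (.inl a)) => .inr (φ.symm a)
  | .inl (.inr (.inr a)) => .inl (.inr (.inr a))
  | .inr r => .inl (.inr (.inl (φ r)))

theorem wfun_invol (φ : ρ ≃ α) : Function.Involutive (wfun φ) := by
  rintro ((p | (a | a)) | r) <;> simp [wfun]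

def wperm (φ : ρ ≃ α) : Perm (GType α ρ) := (wfun_invol φ).toPerm

def zfun (φ : ρ ≃ α) : GType α ρ → GType α ρ := fun s =>
  match s with
  | .inl (.inl p) => .inl (.inl p)
  | .inl (.inr (.inl a)) => .inl (.inr (.inl a))
  | .inl (.inr (.inr a)) => .inr (φ.symm a)
  | .inr r => .inl (.inr (.inr (φ r)))

theorem zfun_invol (φ : ρ ≃ α) : Function.Involutive (zfun φ) := by
  rintro ((p | (a | a)) | r) <;> simp [zfun]

def zperm (φ : ρ ≃ α) : Perm (GType α ρ) := (zfun_invol φ).toPerm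


-- the three disjoint regions
def coreS : Set (GType α ρ) := {s | ∃ p, s = .inl (.inl p)}
def TS : Set (GType α ρ) := {s | ∃ a, s = .inl (.inr (.inl a))}
def T'S : Set (GType α ρ) := {s | ∃ a, s = .inl (.inr (.inr a))}

theorem galvinStep (φ : ρ ≃ α) (K : Subgroup (Perm (GType α ρ)))
    (hdirty : ∀ τ : Perm ((ℤ × α) ⊕ (α ⊕ α)), ∃ h ∈ K,
      ∀ c, h (Sum.inl c) = Sum.inl (τ c))
    (hw : wperm φ ∈ K) (hz : zperm φ ∈ K) :
    ∀ σ : Perm α, hatPerm (atZero σ) ∈ K := by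
  intro σ
  -- the two permutations x and y downstairs
  set x : Perm (ℤ × α) := ashift σ with hxdef
  set y : Perm (ℤ × α) := bshift with hydef
  obtain ⟨hx, hxK, hxval⟩ := hdirty (Equiv.sumCongr x (Equiv.refl (α ⊕ α)))
  obtain ⟨hy, hyK, hyval⟩ := hdirty (Equiv.sumCongr y (Equiv.refl (α ⊕ α)))
  set P : Perm (GType α ρ) := wperm φ * hx * (wperm φ)⁻¹ with hPdef
  set Q : Perm (GType α ρ) := zperm φ * hy * (zperm φ)⁻¹ with hQdef
  have hPK : P ∈ K := mul_mem (mul_mem hw hxK) (inv_mem hw)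
  have hQK : Q ∈ K := mul_mem (mul_mem hz hyK) (inv_mem hz)
  -- P agrees with hatPerm x off TS
  have hP : ∀ s ∉ TS (α := α) (ρ := ρ), P s = hatPerm x s := by
    rintro ((p | (a | a)) | r) hs
    · show wperm φ (hx ((wperm φ)⁻¹ (.inl (.inl p)))) = _
      show wperm φ (hx (.inl (.inl p))) = _
      rw [hxval]
      rfl
    · exact absurd ⟨a, rfl⟩ hs
    · show wperm φ (hx ((wperm φ)⁻¹ (.inl (.inr (.inr a))))) = _
      show wperm φ (hx (.inl (.inr (.inr a)))) = _
      rw [hxval]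
      rfl
    · show wperm φ (hx ((wperm φ)⁻¹ (.inr r))) = _
      show wperm φ (hx (.inl (.inr (.inl (φ r))))) = _
      rw [hxval]
      show wfun φ (.inl (.inr (.inl (φ r)))) = _
      simp [wfun, hatPerm]
  have hQ : ∀ s ∉ T'S (α := α) (ρ := ρ), Q s = hatPerm y s := by
    rintro ((p | (a | a)) | r) hs
    · show zperm φ (hy ((zperm φ)⁻¹ (.inl (.inl p)))) = _
      show zperm φ (hy (.inl (.inl p))) = _
      rw [hyval]
      rfl
    · show zperm φ (hy ((zperm φ)⁻¹ (.inl (.inr (.inl a))))) = _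
      show zperm φ (hy (.inl (.inr (.inl a)))) = _
      rw [hyval]
      rfl
    · exact absurd ⟨a, rfl⟩ hs
    · show zperm φ (hy ((zperm φ)⁻¹ (.inr r))) = _
      show zperm φ (hy (.inl (.inr (.inr (φ r))))) = _
      rw [hyval]
      show zfun φ (.inl (.inr (.inr (φ r)))) = _
      simp [zfun, hatPerm]
  -- dirt elements
  set d : Perm (GType α ρ) := (hatPerm x)⁻¹ * P with hddef
  set e : Perm (GType α ρ) := (hatPerm y)⁻¹ * Q with hedef
  have hdFix : FixesOff (TS (α := α) (ρ := ρ)) d := by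
    intro s hs
    show (hatPerm x)⁻¹ (P s) = s
    rw [hP s hs, Perm.inv_apply_self]
  have heFix : FixesOff (T'S (α := α) (ρ := ρ)) e := by
    intro s hs
    show (hatPerm y)⁻¹ (Q s) = s
    rw [hQ s hs, Perm.inv_apply_self]
  have hxFix : FixesOff (coreS (α := α) (ρ := ρ)) (hatPerm x) := by
    rintro ((p | (a | a)) | r) hs
    · exact absurd ⟨p, rfl⟩ hs
    · rfl
    · rfl
    · rfl
  have hyFix : FixesOff (coreS (α := α) (ρ := ρ)) (hatPerm y) := by
    rintro ((p | (a | a)) | r) hs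
    · exact absurd ⟨p, rfl⟩ hs
    · rfl
    · rfl
    · rfl
  have hdisjTC : Disjoint (TS (α := α) (ρ := ρ)) coreS := by
    rw [Set.disjoint_left]
    rintro s ⟨a, rfl⟩ ⟨p, hp⟩
    simp at hp
  have hdisjTT' : Disjoint (TS (α := α) (ρ := ρ)) T'S := by
    rw [Set.disjoint_left]
    rintro s ⟨a, rfl⟩ ⟨b, hb⟩
    simp at hb
  have hdisjT'C : Disjoint (T'S (α := α) (ρ := ρ)) coreS := by
    rw [Set.disjoint_left]
    rintro s ⟨a, rfl⟩ ⟨p, hp⟩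
    simp at hp
  have hc1 : Commute d (hatPerm (ρ := ρ) y) := hdFix.commute hyFix hdisjTC
  have hc2 : Commute d e := hdFix.commute heFix hdisjTT'
  have hc3 : Commute e (hatPerm (ρ := ρ) x) := heFix.commute hxFix hdisjT'C
  have hPd : P = hatPerm x * d := by rw [hddef]; group
  have hQe : Q = hatPerm y * e := by rw [hedef]; group
  have swap_ab : ∀ a b : Perm (GType α ρ), Commute a b → ∀ c, a * (b * c) = b * (a * c) := by
    intro a b h c
    rw [← mul_assoc, h.eq, mul_assoc]
  have hcomm : P * Q * P⁻¹ * Q⁻¹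
      = hatPerm x * (hatPerm y * ((hatPerm (ρ := ρ) x)⁻¹ * (hatPerm y)⁻¹)) := by
    rw [hPd, hQe]
    simp only [mul_inv_rev, mul_assoc]
    rw [swap_ab d (hatPerm y) hc1, swap_ab d e hc2, mul_inv_cancel_left,
      swap_ab e ((hatPerm x)⁻¹) hc3.inv_right, mul_inv_cancel_left]
  have hfinal : hatPerm (ρ := ρ) (atZero σ) = P * Q * P⁻¹ * Q⁻¹ := by
    rw [hcomm, ← mul_assoc, ← mul_assoc, hatPerm_mul, hatPerm_inv, hatPerm_mul,
      hatPerm_inv, hatPerm_mul]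
    congr 1
    apply Equiv.ext
    rintro ⟨k, a⟩
    simp only [Perm.mul_apply]
    have hyi : (y⁻¹ : Perm (ℤ × α)) (k, a) = (k - 1, a) := rfl
    rw [hyi]
    have hxi : (x⁻¹ : Perm (ℤ × α)) (k - 1, a)
        = (k - 1, if 0 ≤ k - 1 then σ.symm a else a) := rfl
    rw [hxi]
    by_cases h : 0 ≤ k - 1
    · rw [if_pos h]
      have hy2 : y (k - 1, σ.symm a) = (k - 1 + 1, σ.symm a) := rfl
      rw [hy2]
      have hk : k - 1 + 1 = k := by ring
      rw [hk]
      have hx2 : x (k, σ.symm a) = (k, if 0 ≤ k then σ (σ.symm a) else σ.symm a) := rfl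
      rw [hx2, if_pos (by omega : (0 : ℤ) ≤ k)]
      show (k, if k = 0 then σ a else a) = _
      rw [if_neg (by omega : ¬ k = 0)]
      simp
    · rw [if_neg h]
      have hy2 : y (k - 1, a) = (k - 1 + 1, a) := rfl
      rw [hy2]
      have hk : k - 1 + 1 = k := by ring
      rw [hk]
      have hx2 : x (k, a) = (k, if 0 ≤ k then σ a else a) := rfl
      rw [hx2]
      show (k, if k = 0 then σ a else a) = _
      by_cases hk0 : k = 0
      · subst hk0
        norm_num
      · rw [if_neg hk0, if_neg (by omega : ¬ (0 : ℤ) ≤ k)]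
  rw [hfinal]
  exact mul_mem (mul_mem (mul_mem hPK hQK) (inv_mem hPK)) (inv_mem hQK)

end Galvin

section Chain
variable {Γ : Type u}

/-- fiberwise permutation over a set of indices -/
noncomputable def fibPerm (τ : ℕ → Perm Γ) (A : Set ℕ) : Perm (ℕ × Γ) :=
  letI := Classical.decPred (· ∈ A)
  { toFun := fun p => (p.1, if p.1 ∈ A then τ p.1 p.2 else p.2)
    invFun := fun p => (p.1, if p.1 ∈ A then (τ p.1).symm p.2 else p.2)
    left_inv := by rintro ⟨i, γ⟩; by_cases h : i ∈ A <;> simp [h]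
    right_inv := by rintro ⟨i, γ⟩; by_cases h : i ∈ A <;> simp [h] }

theorem fibPerm_apply_mem {τ : ℕ → Perm Γ} {A : Set ℕ} {p : ℕ × Γ} (h : p.1 ∈ A) :
    fibPerm τ A p = (p.1, τ p.1 p.2) := by
  unfold fibPerm
  simp [h]

theorem fibPerm_apply_not {τ : ℕ → Perm Γ} {A : Set ℕ} {p : ℕ × Γ} (h : p.1 ∉ A) :
    fibPerm τ A p = p := by
  unfold fibPerm
  simp [h]

theorem chainStep (H : ℕ → Subgroup (Perm (ℕ × Γ))) (hmono : Monotone H)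
    (hcov : ∀ g, ∃ n, g ∈ H n) :
    ∃ i₀ : ℕ, ∀ τ : Perm Γ, ∃ h ∈ H i₀, ∀ γ, h (i₀, γ) = (i₀, τ γ) := by
  classical
  by_contra hno
  push_neg at hno
  choose τ hτ using hno
  set q : ℚ ≃ ℕ := Denumerable.eqv ℚ with hqdef
  set A : ℝ → Set ℕ := fun r => {n | ((q.symm n : ℚ) : ℝ) < r} with hAdef
  have hAmono : ∀ {r s : ℝ}, r ≤ s → A r ⊆ A s := by
    intro r s hrs n hn
    exact lt_of_lt_of_le hn hrs
  choose nn hnn using fun r : ℝ => hcov (fibPerm τ (A r))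
  have hninj : ¬ Function.Injective nn := by
    intro hinj
    exact not_countable (hinj.countable)
  obtain ⟨r₀, s₀, heq0, hne0⟩ := Function.not_injective_iff.mp hninj
  obtain ⟨r, s, hrs, heq⟩ : ∃ r s : ℝ, r < s ∧ nn r = nn s := by
    rcases hne0.lt_or_gt with h | h
    · exact ⟨r₀, s₀, h, heq0⟩
    · exact ⟨s₀, r₀, h, heq0.symm⟩
  set D : Set ℕ := A s \ A r with hDdef
  have hDinf : D.Infinite := by
    obtain ⟨p₁, hp₁⟩ := exists_rat_btwn hrs
    obtain ⟨p₂, hp₂⟩ := exists_rat_btwn hp₁.2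
    have hq12 : p₁ < p₂ := by exact_mod_cast hp₂.1
    have hIoo : (Set.Ioo p₁ p₂).Infinite := Set.infinite_coe_iff.mp (Set.Ioo.infinite hq12)
    have himg : (⇑q '' Set.Ioo p₁ p₂) ⊆ D := by
      rintro n ⟨p, hp, rfl⟩
      constructor
      · show ((q.symm (q p) : ℚ) : ℝ) < s
        rw [Equiv.symm_apply_apply]
        calc ((p : ℚ) : ℝ) < ((p₂ : ℚ) : ℝ) := by exact_mod_cast hp.2
          _ < s := hp₂.2
      · intro hmem
        have h1 : ((q.symm (q p) : ℚ) : ℝ) < r := hmem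
        rw [Equiv.symm_apply_apply] at h1
        have h2 : (r : ℝ) < ((p : ℚ) : ℝ) := lt_trans hp₁.1 (by exact_mod_cast hp.1)
        linarith
    exact Set.Infinite.mono himg (hIoo.image q.injective.injOn)
  obtain ⟨i, hiD, hilt⟩ := hDinf.exists_gt (nn r)
  have hsplit : fibPerm τ (A s) = fibPerm τ D * fibPerm τ (A r) := by
    apply Equiv.ext
    rintro ⟨j, γ⟩
    rw [Perm.mul_apply]
    by_cases h1 : j ∈ A r
    · have h2 : j ∈ A s := hAmono hrs.le h1
      have h3 : j ∉ D := fun hd => hd.2 h1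
      rw [fibPerm_apply_mem (p := (j, γ)) h2, fibPerm_apply_mem (p := (j, γ)) h1,
        fibPerm_apply_not (p := (j, τ j γ)) h3]
    · rw [fibPerm_apply_not (p := (j, γ)) h1]
      by_cases h2 : j ∈ A s
      · have h3 : j ∈ D := ⟨h2, h1⟩
        rw [fibPerm_apply_mem (p := (j, γ)) h2, fibPerm_apply_mem (p := (j, γ)) h3]
      · have h3 : j ∉ D := fun hd => h2 hd.1
        rw [fibPerm_apply_not (p := (j, γ)) h2, fibPerm_apply_not (p := (j, γ)) h3]
  have hmem : fibPerm τ D ∈ H i := by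
    have h1 : fibPerm τ (A s) ∈ H (nn r) := heq ▸ hnn s
    have h2 : fibPerm τ (A r) ∈ H (nn r) := hnn r
    have h3 : fibPerm τ D = fibPerm τ (A s) * (fibPerm τ (A r))⁻¹ := by
      rw [hsplit]; group
    rw [h3]
    exact hmono hilt.le (mul_mem h1 (inv_mem h2))
  obtain ⟨γ, hγ⟩ := hτ i _ hmem
  exact hγ (fibPerm_apply_mem hiD)
end Chain

section Transport
variable {β γ : Type u}

noncomputable def permGroupEquiv (e : β ≃ γ) : Perm β ≃* Perm γ :=
  { Equiv.permCongr e with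
    map_mul' := by intro f g; ext x; simp [Equiv.permCongr] }

theorem permGroupEquiv_apply (e : β ≃ γ) (g : Perm β) (x : γ) :
    permGroupEquiv e g x = e (g (e.symm x)) := rfl

noncomputable def chainMap (e : β ≃ γ) (H : ℕ → Subgroup (Perm β)) : ℕ → Subgroup (Perm γ) :=
  fun n => Subgroup.map (permGroupEquiv e).toMonoidHom (H n)

theorem chainMap_mono (e : β ≃ γ) {H : ℕ → Subgroup (Perm β)} (h : Monotone H) :
    Monotone (chainMap e H) := fun m n hmn => Subgroup.map_mono (h hmn)

theorem chainMap_cov (e : β ≃ γ) {H : ℕ → Subgroup (Perm β)} (h : ∀ g, ∃ n, g ∈ H n) :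
    ∀ g, ∃ n, g ∈ chainMap e H n := by
  intro g
  obtain ⟨n, hn⟩ := h ((permGroupEquiv e).symm g)
  exact ⟨n, ⟨_, hn, (permGroupEquiv e).apply_symm_apply g⟩⟩

theorem chainMap_mem (e : β ≃ γ) {H : ℕ → Subgroup (Perm β)} {g : Perm β} {n : ℕ}
    (h : g ∈ H n) : permGroupEquiv e g ∈ chainMap e H n := ⟨g, h, rfl⟩

theorem chainMap_top (e : β ≃ γ) {H : ℕ → Subgroup (Perm β)} {n : ℕ}
    (h : chainMap e H n = ⊤) : H n = ⊤ := by
  apply Subgroup.map_injective (f := (permGroupEquiv e).toMonoidHom) (permGroupEquiv e).injective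
  show chainMap e H n = _
  rw [h]
  exact (Subgroup.map_top_of_surjective _ (permGroupEquiv e).surjective).symm

end Transport

section Assembly
variable {X : Type u}

noncomputable def splitAt {Γ : Type u} (i₀ : ℕ) : (ℕ × Γ) ≃ Γ ⊕ ({i : ℕ // i ≠ i₀} × Γ) where
  toFun p := if h : p.1 = i₀ then Sum.inl p.2 else Sum.inr (⟨p.1, h⟩, p.2)
  invFun s := Sum.elim (fun c => (i₀, c)) (fun q => (q.1.1, q.2)) s
  left_inv := by
    rintro ⟨i, c⟩
    by_cases h : i = i₀ <;> simp [h]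
  right_inv := by
    rintro (c | ⟨⟨j, hj⟩, c⟩)
    · simp
    · simp [hj]

theorem splitAt_fst {Γ : Type u} (i₀ : ℕ) (c : Γ) : splitAt i₀ (i₀, c) = Sum.inl c := by
  simp [splitAt]

noncomputable def sortZeta (X ρ : Type u) :
    GType X ρ ≃ X ⊕ (({k : ℤ // k ≠ 0} × X) ⊕ ((X ⊕ X) ⊕ ρ)) where
  toFun s := match s with
    | .inl (.inl (k, a)) => if h : k = 0 then .inl a else .inr (.inl (⟨k, h⟩, a))
    | .inl (.inr v) => .inr (.inr (.inl v))
    | .inr r => .inr (.inr (.inr r))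
  invFun s := match s with
    | .inl a => .inl (.inl (0, a))
    | .inr (.inl (k, a)) => .inl (.inl (k.1, a))
    | .inr (.inr (.inl v)) => .inl (.inr v)
    | .inr (.inr (.inr r)) => .inr r
  left_inv := by
    rintro ((⟨k, a⟩ | v) | r)
    · by_cases h : k = 0 <;> simp [h]
    · rfl
    · rfl
  right_inv := by
    rintro (a | (⟨⟨k, hk⟩, a⟩ | (v | r)))
    · simp
    · simp [hk]
    · rfl
    · rfl

theorem permGroupEquiv_trans {β γ δ : Type u} (e : β ≃ γ) (f : γ ≃ δ) (g : Perm β) :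
    permGroupEquiv (e.trans f) g = permGroupEquiv f (permGroupEquiv e g) := by
  apply Equiv.ext
  intro x
  rfl

theorem sortZeta_conj {ρ : Type u} (σ : Perm X) :
    permGroupEquiv (sortZeta X ρ) (hatPerm (atZero σ))
      = Equiv.sumCongr σ (Equiv.refl (({k : ℤ // k ≠ 0} × X) ⊕ ((X ⊕ X) ⊕ ρ))) := by
  apply Equiv.ext
  intro x
  rw [permGroupEquiv_apply]
  rcases x with a | (⟨⟨k, hk⟩, a⟩ | (v | r))
  · show sortZeta X ρ (hatPerm (atZero σ) (.inl (.inl (0, a)))) = _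
    show sortZeta X ρ (.inl (.inl (atZero σ (0, a)))) = _
    have h0 : atZero σ ((0 : ℤ), a) = ((0 : ℤ), σ a) := by simp [atZero]
    rw [h0]
    show (if h : (0 : ℤ) = 0 then (Sum.inl (σ a) : X ⊕ (({k : ℤ // k ≠ 0} × X) ⊕ ((X ⊕ X) ⊕ ρ))) else .inr (.inl (⟨0, h⟩, σ a))) = _
    rw [dif_pos rfl]
    rfl
  · show sortZeta X ρ (hatPerm (atZero σ) (.inl (.inl (k, a)))) = _
    show sortZeta X ρ (.inl (.inl (atZero σ (k, a)))) = _
    have h0 : atZero σ (k, a) = (k, a) := by simp [atZero, hk]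
    rw [h0]
    show (if h : k = 0 then (Sum.inl a : X ⊕ (({k : ℤ // k ≠ 0} × X) ⊕ ((X ⊕ X) ⊕ ρ))) else .inr (.inl (⟨k, h⟩, a))) = _
    rw [dif_neg hk]
    rfl
  · rfl
  · rfl

theorem mainCof [Infinite X] (H : ℕ → Subgroup (Perm X)) (hmono : Monotone H)
    (hcov : ∀ g, ∃ n, g ∈ H n) : ∃ n, H n = ⊤ := by
  classical
  have haX := Cardinal.aleph0_le_mk X
  have hmulX : ℵ₀ * #X = #X :=
    Cardinal.mul_eq_right haX haX Cardinal.aleph0_ne_zero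
  have hGamma : #((ℤ × X) ⊕ (X ⊕ X)) = #X := by
    rw [Cardinal.mk_sum, Cardinal.mk_prod, Cardinal.mk_sum]
    simp only [Cardinal.lift_id, Cardinal.lift_uzero, Cardinal.mk_int, Cardinal.lift_aleph0]
    rw [hmulX, Cardinal.add_eq_self haX, Cardinal.add_eq_self haX]
  have hX1 : #(ℕ × ((ℤ × X) ⊕ (X ⊕ X))) = #X := by
    rw [Cardinal.mk_prod]
    simp only [Cardinal.lift_uzero, Cardinal.mk_denumerable, Cardinal.lift_aleph0]
    rw [hGamma, hmulX]
  obtain ⟨e0⟩ : Nonempty (X ≃ ℕ × ((ℤ × X) ⊕ (X ⊕ X))) := Cardinal.eq.1 hX1.symm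
  set H1 := chainMap e0 H with hH1def
  have h1mono : Monotone H1 := chainMap_mono e0 hmono
  have h1cov : ∀ g, ∃ n, g ∈ H1 n := chainMap_cov e0 hcov
  obtain ⟨i₀, hdirty1⟩ := chainStep H1 h1mono h1cov
  set e1 : (ℕ × ((ℤ × X) ⊕ (X ⊕ X))) ≃
      ((ℤ × X) ⊕ (X ⊕ X)) ⊕ ({i : ℕ // i ≠ i₀} × ((ℤ × X) ⊕ (X ⊕ X))) := splitAt i₀
    with he1def
  set H2 := chainMap e1 H1 with hH2def
  have h2mono : Monotone H2 := chainMap_mono e1 h1mono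
  have h2cov : ∀ g, ∃ n, g ∈ H2 n := chainMap_cov e1 h1cov
  have hdirty2 : ∀ τ : Perm ((ℤ × X) ⊕ (X ⊕ X)), ∃ h ∈ H2 i₀,
      ∀ c : (ℤ × X) ⊕ (X ⊕ X), h (Sum.inl c) = Sum.inl (τ c) := by
    intro τ
    obtain ⟨h, hmem, hval⟩ := hdirty1 τ
    refine ⟨permGroupEquiv e1 h, chainMap_mem e1 hmem, ?_⟩
    intro c
    rw [permGroupEquiv_apply]
    have hs : e1.symm (Sum.inl c) = (i₀, c) := rfl
    rw [hs, hval c, he1def]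
    exact splitAt_fst i₀ (τ c)
  have hrho : #({i : ℕ // i ≠ i₀} × ((ℤ × X) ⊕ (X ⊕ X))) = #X := by
    have hsub : #({i : ℕ // i ≠ i₀}) = ℵ₀ := by
      haveI : Infinite {i : ℕ // i ≠ i₀} :=
        Infinite.of_injective (fun n => (⟨n + i₀ + 1, by omega⟩ : {i : ℕ // i ≠ i₀}))
          (by intro a b hab; simpa using hab)
      exact Cardinal.mk_eq_aleph0 _
    rw [Cardinal.mk_prod, hsub]
    simp only [Cardinal.lift_uzero, Cardinal.lift_aleph0]
    rw [hGamma, hmulX]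
  obtain ⟨φ⟩ : Nonempty (({i : ℕ // i ≠ i₀} × ((ℤ × X) ⊕ (X ⊕ X))) ≃ X) := Cardinal.eq.1 hrho
  obtain ⟨nw, hnw⟩ := h2cov (wperm φ)
  obtain ⟨nz, hnz⟩ := h2cov (zperm φ)
  set M0 := max i₀ (max nw nz) with hM0def
  have hgal : ∀ σ : Perm X, hatPerm (atZero σ) ∈ H2 M0 := by
    refine galvinStep φ (H2 M0) ?_ ?_ ?_
    · intro τ
      obtain ⟨h, hmem, hval⟩ := hdirty2 τ
      exact ⟨h, h2mono (le_max_left _ _) hmem, hval⟩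
    · exact h2mono (le_trans (le_max_left _ _) (le_max_right _ _)) hnw
    · exact h2mono (le_trans (le_max_right _ _) (le_max_right _ _)) hnz
  have hzeta : #(({k : ℤ // k ≠ 0} × X) ⊕
      ((X ⊕ X) ⊕ ({i : ℕ // i ≠ i₀} × ((ℤ × X) ⊕ (X ⊕ X))))) = #X := by
    have hsub : #({k : ℤ // k ≠ 0}) = ℵ₀ := by
      haveI : Infinite {k : ℤ // k ≠ 0} :=
        Infinite.of_injective (fun n : ℕ => (⟨(n : ℤ) + 1, by omega⟩ : {k : ℤ // k ≠ 0}))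
          (by intro a b hab; simp only [Subtype.mk.injEq] at hab; omega)
      exact Cardinal.mk_eq_aleph0 _
    rw [Cardinal.mk_sum, Cardinal.mk_prod, Cardinal.mk_sum, hsub]
    simp only [Cardinal.lift_id, Cardinal.lift_uzero, Cardinal.lift_aleph0]
    rw [hrho, hmulX, mkSum (α := X), Cardinal.add_eq_self haX, Cardinal.add_eq_self haX]
  obtain ⟨eζ⟩ : Nonempty ((({k : ℤ // k ≠ 0} × X) ⊕
      ((X ⊕ X) ⊕ ({i : ℕ // i ≠ i₀} × ((ℤ × X) ⊕ (X ⊕ X))))) ≃ X) := Cardinal.eq.1 hzeta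
  set e3 := (sortZeta X ({i : ℕ // i ≠ i₀} × ((ℤ × X) ⊕ (X ⊕ X)))).trans
      (Equiv.sumCongr (Equiv.refl X) eζ) with he3def
  set H3 := chainMap e3 H2 with hH3def
  have h3mono : Monotone H3 := chainMap_mono e3 h2mono
  have h3cov : ∀ g, ∃ n, g ∈ H3 n := chainMap_cov e3 h2cov
  have h1hyp : ∀ σ : Perm X, (Equiv.sumCongr σ (Equiv.refl X) : Perm (X ⊕ X)) ∈ H3 M0 := by
    intro σ
    have hmem := chainMap_mem e3 (hgal σ)
    have heq : permGroupEquiv e3 (hatPerm (atZero σ))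
        = (Equiv.sumCongr σ (Equiv.refl X) : Perm (X ⊕ X)) := by
      rw [he3def, permGroupEquiv_trans, sortZeta_conj]
      apply Equiv.ext
      rintro (a | b)
      · rfl
      · rw [permGroupEquiv_apply]
        have hs1 : (Equiv.sumCongr (Equiv.refl X) eζ).symm (Sum.inr b)
            = Sum.inr (eζ.symm b) := rfl
        rw [hs1]
        have hs2 : (Equiv.sumCongr σ (Equiv.refl (({k : ℤ // k ≠ 0} × X) ⊕
            ((X ⊕ X) ⊕ ({i : ℕ // i ≠ i₀} × ((ℤ × X) ⊕ (X ⊕ X)))))))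
            (Sum.inr (eζ.symm b)) = Sum.inr (eζ.symm b) := rfl
        rw [hs2]
        show Sum.inr (eζ (eζ.symm b)) = _
        rw [Equiv.apply_symm_apply]
        rfl
    rw [← heq]
    exact hmem
  obtain ⟨nt, hnt⟩ := h3cov (Equiv.sumComm X X)
  obtain ⟨A, A2, -, -, hdisjA, hAc1, hA2c⟩ :=
    exists_two_disjoint_large (β := X) (s := (Set.univ : Set X)) (by rw [Cardinal.mk_univ])
  have hAcompl : #↥(Aᶜ) = #X := by
    refine le_antisymm (Cardinal.mk_set_le _) ?_
    rw [← hA2c]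
    refine Cardinal.mk_le_mk_of_subset ?_
    intro x hx
    exact Set.disjoint_right.mp hdisjA hx
  have hL : #↥(Set.range (Sum.inl : X → X ⊕ X)) = #X := by
    rw [Cardinal.mk_range_eq _ Sum.inl_injective]
  have htgt : #↥((Sum.inl '' A ∪ Sum.inr '' A : Set (X ⊕ X))) = #X := by
    refine le_antisymm (le_trans (Cardinal.mk_set_le _) (le_of_eq (mkSum (α := X)))) ?_
    calc #X = #↥A := hAc1.symm
      _ = #↥(Sum.inl '' A : Set (X ⊕ X)) := (Cardinal.mk_image_eq Sum.inl_injective).symm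
      _ ≤ _ := Cardinal.mk_le_mk_of_subset Set.subset_union_left
  have hLc : #↥((Set.range (Sum.inl : X → X ⊕ X))ᶜ) = #X := by
    rw [Set.compl_range_inl, Cardinal.mk_range_eq _ Sum.inr_injective]
  have htgtc : #↥(((Sum.inl '' A ∪ Sum.inr '' A : Set (X ⊕ X)))ᶜ) = #X := by
    refine le_antisymm (le_trans (Cardinal.mk_set_le _) (le_of_eq (mkSum (α := X)))) ?_
    have hsub : (Sum.inl '' Aᶜ : Set (X ⊕ X)) ⊆ ((Sum.inl '' A ∪ Sum.inr '' A : Set (X ⊕ X)))ᶜ := by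
      rintro x ⟨a, ha, rfl⟩ hmem
      rcases hmem with ⟨b, hb, hba⟩ | ⟨b, hb, hba⟩
      · cases hba
        exact ha hb
      · cases hba
    calc #X = #↥(Aᶜ) := hAcompl.symm
      _ = #↥(Sum.inl '' Aᶜ : Set (X ⊕ X)) := (Cardinal.mk_image_eq Sum.inl_injective).symm
      _ ≤ _ := Cardinal.mk_le_mk_of_subset hsub
  obtain ⟨uelt, huim⟩ := exists_perm_image (hL.trans htgt.symm) (hLc.trans htgtc.symm)
  obtain ⟨nu, hnu⟩ := h3cov uelt
  set M := max M0 (max nt nu) with hMdef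
  have htop : H3 M = ⊤ :=
    stepB (H3 M) (fun σ => h3mono (le_max_left _ _) (h1hyp σ))
      (h3mono (le_trans (le_max_left _ _) (le_max_right _ _)) hnt) A hAc1 hAcompl uelt
      (h3mono (le_trans (le_max_right _ _) (le_max_right _ _)) hnu) huim
  exact ⟨M, chainMap_top e0 (chainMap_top e1 (chainMap_top e3 htop))⟩
end Assembly

end MNTools

theorem exists_stage_generating {Ω : Type*} [Infinite Ω]
    (S : Set (Equiv.Perm Ω)) (hS : Subgroup.closure S = ⊤)
    (a : ℕ → Equiv.Perm Ω) (ha : Function.Injective a) (haS : Set.range a ⊆ S) :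
    ∃ n : ℕ, Subgroup.closure ((S \ Set.range a) ∪ (a '' {i | i ≤ n})) = ⊤ := by
  set H : ℕ → Subgroup (Equiv.Perm Ω) :=
    fun n => Subgroup.closure ((S \ Set.range a) ∪ (a '' {i | i ≤ n})) with hHdef
  have hmono : Monotone H := by
    intro m n hmn
    apply Subgroup.closure_mono
    apply Set.union_subset_union_right
    exact Set.image_mono (fun i hi => le_trans hi hmn)
  have hcov : ∀ g, ∃ n, g ∈ H n := by
    intro g
    have hdir : Directed (· ≤ ·) H := hmono.directed_le
    have htop2 : Subgroup.closure S ≤ ⨆ n, H n := by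
      rw [Subgroup.closure_le]
      intro s hs
      refine SetLike.mem_coe.mpr ?_
      by_cases hrange : s ∈ Set.range a
      · obtain ⟨i, rfl⟩ := hrange
        have hmem : a i ∈ H i := Subgroup.subset_closure (Or.inr ⟨i, le_refl i, rfl⟩)
        exact le_iSup H i hmem
      · have hmem : s ∈ H 0 := Subgroup.subset_closure (Or.inl ⟨hs, hrange⟩)
        exact le_iSup H 0 hmem
    have hsup : g ∈ ⨆ n, H n := by
      apply htop2
      rw [hS]
      trivial
    exact (Subgroup.mem_iSup_of_directed hdir).1 hsup
  exact mainCof H hmono hcov
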